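/- Let G be a finite connected Helly graph of diameter d ≥ 1 and let u, v be vertices of G with d_G(u,v) = d. Then there exists a vertex z ≠ v of G with N[v] ⊆ N[z] and d_G(u,z) ≤ d − 1. In particular, every finite connected Helly graph on at least two vertices has a corner. -/

import Mathlib

/-- A graph is Helly if every nonempty, pairwise-intersecting family of balls
has a common point. -/
def IsHellyGraph {W : Type*} (H : SimpleGraph W) : Prop :=
  ∀ s : Set (W × ℕ), s.Nonempty →
    (∀ p ∈ s, ∀ q ∈ s, ∃ w, H.dist p.1 w ≤ p.2 ∧ H.dist q.1 w ≤ q.2) →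
    ∃ w, ∀ p ∈ s, H.dist p.1 w ≤ p.2

/-- A vertex `x` is a corner of `G` if some neighbor `y` of `x`
satisfies `N[x] ⊆ N[y]`. -/
def IsGraphCorner {W : Type*} (G : SimpleGraph W) (x : W) : Prop :=
  ∃ y, G.Adj x y ∧ insert x (G.neighborSet x) ⊆ insert y (G.neighborSet y)

lemma aux_exists_adj {V : Type*} (G : SimpleGraph V) (hG : G.Connected)
    (u w : V) (k : ℕ) (h : G.dist u w = k + 1) :
    ∃ x, G.Adj x w ∧ G.dist u x = k := by
  obtain ⟨p, hp⟩ := hG.exists_walk_length_eq_dist w u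
  rw [SimpleGraph.dist_comm (G := G) (u := u) (v := w)] at h
  cases p with
  | nil => simp at h
  | cons hadj q =>
      rename_i x
      refine ⟨x, hadj.symm, le_antisymm ?_ ?_⟩
      · calc G.dist u x = G.dist x u := SimpleGraph.dist_comm
          _ ≤ q.length := SimpleGraph.dist_le q
          _ = k := by simp at hp; omega
      · have h1 : G.dist x w = 1 := SimpleGraph.dist_eq_one_iff_adj.2 hadj.symm
        have := hG.dist_triangle (u := u) (v := x) (w := w)
        rw [SimpleGraph.dist_comm (G := G) (u := w) (v := u)] at h
        omega

/-- if `G` is a finite connected Helly graph of diameter `d ≥ 1` and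
`u, v` are vertices at distance `d`, then there is a vertex `z ≠ v` with
`N[v] ⊆ N[z]` and `d_G(u,z) ≤ d - 1`; in particular `G` has a corner. -/
theorem helly_has_corner {V : Type*} [Fintype V] (G : SimpleGraph V)
    (hG : G.Connected) (hHelly : IsHellyGraph G)
    (d : ℕ) (hd : 1 ≤ d) (hdiam : ∀ a b : V, G.dist a b ≤ d)
    (u v : V) (huv : G.dist u v = d) :
    (∃ z, z ≠ v ∧ insert v (G.neighborSet v) ⊆ insert z (G.neighborSet z) ∧
      G.dist u z ≤ d - 1) ∧ ∃ x, IsGraphCorner G x := by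
  -- helper facts about distance ≤ 1 vs closed neighborhood
  have memd : ∀ a b : V, b ∈ insert a (G.neighborSet a) → G.dist b a ≤ 1 := by
    intro a b hb
    rcases Set.mem_insert_iff.1 hb with h | h
    · simp [h, G.dist_self]
    · exact le_of_eq (SimpleGraph.dist_eq_one_iff_adj.2 (G.adj_symm h))
  have dmem : ∀ a b : V, G.dist b a ≤ 1 → b ∈ insert a (G.neighborSet a) := by
    intro a b h
    interval_cases h' : G.dist b a
    · left; exact (hG.dist_eq_zero_iff.1 h')
    · right; exact G.adj_symm (SimpleGraph.dist_eq_one_iff_adj.1 h')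
  -- the family of balls
  set S : Set (V × ℕ) :=
    insert (u, d - 1) ((fun w => (w, 1)) '' insert v (G.neighborSet v)) with hS
  have hne : S.Nonempty := ⟨(u, d - 1), Set.mem_insert _ _⟩
  -- ball around u of radius d-1 meets every unit ball around a member of N[v]
  have claimA : ∀ w ∈ insert v (G.neighborSet v),
      ∃ x, G.dist u x ≤ d - 1 ∧ G.dist w x ≤ 1 := by
    intro w hw
    rcases Nat.eq_zero_or_eq_succ_pred (G.dist u w) with h0 | hsucc
    · refine ⟨u, by simp [G.dist_self], ?_⟩
      have : u = w := hG.dist_eq_zero_iff.1 h0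
      simp [← this, G.dist_self]
    · obtain ⟨x, hadj, hx⟩ := aux_exists_adj G hG u w _ hsucc
      refine ⟨x, ?_, le_of_eq (SimpleGraph.dist_eq_one_iff_adj.2 (G.adj_symm hadj))⟩
      have := hdiam u w
      omega
  -- pairwise intersection
  have hpair : ∀ p ∈ S, ∀ q ∈ S, ∃ w, G.dist p.1 w ≤ p.2 ∧ G.dist q.1 w ≤ q.2 := by
    intro p hp q hq
    rcases Set.mem_insert_iff.1 hp with hp | ⟨w1, hw1, rfl⟩ <;>
      rcases Set.mem_insert_iff.1 hq with hq | ⟨w2, hw2, rfl⟩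
    · exact ⟨u, by simp [hp, hq, G.dist_self]⟩
    · obtain ⟨x, hx1, hx2⟩ := claimA w2 hw2
      exact ⟨x, by simp [hp, hx1, hx2]⟩
    · obtain ⟨x, hx1, hx2⟩ := claimA w1 hw1
      exact ⟨x, by simp [hq, hx1, hx2]⟩
    · exact ⟨v, by simpa using ⟨memd v w1 hw1, memd v w2 hw2⟩⟩
  obtain ⟨z, hz⟩ := hHelly S hne hpair
  have hu : G.dist u z ≤ d - 1 := hz (u, d - 1) (Set.mem_insert _ _)
  have hN : ∀ w ∈ insert v (G.neighborSet v), G.dist w z ≤ 1 := by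
    intro w hw
    exact hz (w, 1) (Set.mem_insert_iff.2 (Or.inr ⟨w, hw, rfl⟩))
  have hzv : z ≠ v := by
    rintro rfl
    rw [huv] at hu; omega
  have hsub : insert v (G.neighborSet v) ⊆ insert z (G.neighborSet z) := by
    intro w hw
    exact dmem z w (hN w hw)
  have hadjvz : G.Adj v z := by
    have h1 := hN v (Set.mem_insert _ _)
    have h0 : G.dist v z ≠ 0 := fun h => hzv (hG.dist_eq_zero_iff.1 h).symm
    exact SimpleGraph.dist_eq_one_iff_adj.1 (by omega)
  exact ⟨⟨z, hzv, hsub, hu⟩, v, z, hadjvz, hsub⟩
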